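/- Let F_R be a rooted graph, λ' > 2, ℓ ∈ ℕ, and let x be an eigenvector of the path extension (F_R, ℓ) with eigenvalue −λ', where v_0…v_ℓ is the attached path (v_0 adjacent to all roots). Writing x_i for the value of x at v_i, one has x_i(x_i + x_{i+1}) ≥ 0 for all i ∈ {0, …, ℓ−1}. -/

import Mathlib

open Matrix Filter
open scoped Classical

noncomputable def adjM {α : Type*} [Fintype α] (G : SimpleGraph α) : Matrix α α ℝ :=
  fun x y => if G.Adj x y then 1 else 0

noncomputable def minEig {α : Type*} [Fintype α] (G : SimpleGraph α) : ℝ :=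
  sInf {μ : ℝ | ∃ x : α → ℝ, x ≠ 0 ∧ adjM G *ᵥ x = μ • x}

/-- The path extension `(F_R, ℓ)`: add a path `v_0 … v_ℓ` (vertices `Fin (ℓ+1)`) to `F`,
joining `v_0` to every vertex of the root set `R`. -/
def pathExt {V : Type*} (F : SimpleGraph V) (R : Set V) (ℓ : ℕ) :
    SimpleGraph (V ⊕ Fin (ℓ + 1)) :=
  SimpleGraph.fromRel (fun x y =>
    match x, y with
    | Sum.inl u, Sum.inl v => F.Adj u v
    | Sum.inl u, Sum.inr i => u ∈ R ∧ (i : ℕ) = 0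
    | Sum.inr i, Sum.inr j => (j : ℕ) = (i : ℕ) + 1
    | _, _ => False)

/-- Key algebraic lemma: if `a b + μ b² ≤ 0` with `μ ≥ 1`, then `a (a + b) ≥ 0`. -/
lemma stmt8_aux (μ a b : ℝ) (hμ : 1 ≤ μ) (h : a * b + μ * b ^ 2 ≤ 0) :
    0 ≤ a * (a + b) := by
  have hab : a * b ≤ 0 := by nlinarith [sq_nonneg b]
  nlinarith [sq_nonneg (a + μ * b)]

/-- If `x` is an eigenvector of the path extension `(F_R, ℓ)` with eigenvalue `-λ'`,
`λ' > 2`, then `x_i (x_i + x_{i+1}) ≥ 0` for consecutive path vertices `v_i, v_{i+1}`. -/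
theorem stmt8 {V : Type*} [Fintype V] (F : SimpleGraph V) (R : Set V) (hR : R.Nonempty)
    (ℓ : ℕ) (lam : ℝ) (hlam : 2 < lam) (x : (V ⊕ Fin (ℓ + 1)) → ℝ) (hx : x ≠ 0)
    (heig : adjM (pathExt F R ℓ) *ᵥ x = (-lam) • x) :
    ∀ i j : Fin (ℓ + 1), (j : ℕ) = (i : ℕ) + 1 →
      0 ≤ x (Sum.inr i) * (x (Sum.inr i) + x (Sum.inr j)) := by
  intro i j hij
  set y : ℕ → ℝ := fun n => if h : n < ℓ + 1 then x (Sum.inr ⟨n, h⟩) else 0 with hy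
  have hxy : ∀ k : Fin (ℓ + 1), x (Sum.inr k) = y (k : ℕ) := by
    intro k
    simp [hy, k.isLt]
    intro h; exact absurd k.isLt (by omega)
  -- the eigen recurrence at interior/endpoint path vertices
  have heq : ∀ n : ℕ, 1 ≤ n → n ≤ ℓ → lam * y n + y (n - 1) + y (n + 1) = 0 := by
    intro n h1 h2
    have hn : n < ℓ + 1 := by omega
    have hE := congrFun heig (Sum.inr ⟨n, hn⟩)
    rw [Matrix.mulVec, dotProduct, Fintype.sum_sum_type] at hE
    have hV : ∑ u : V, adjM (pathExt F R ℓ) (Sum.inr ⟨n, hn⟩) (Sum.inl u) * x (Sum.inl u) = 0 := by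
      apply Finset.sum_eq_zero
      intro u _
      have hadj : ¬ (pathExt F R ℓ).Adj (Sum.inr ⟨n, hn⟩) (Sum.inl u) := by
        simp [pathExt, SimpleGraph.fromRel_adj]
        omega
      simp [adjM, hadj]
    have hF : ∑ k : Fin (ℓ + 1),
        adjM (pathExt F R ℓ) (Sum.inr ⟨n, hn⟩) (Sum.inr k) * x (Sum.inr k)
          = y (n - 1) + y (n + 1) := by
      by_cases htop : n = ℓ
      · -- only neighbor is n - 1
        have hy1 : y (n + 1) = 0 := by
          simp [hy]
          omega
        have ha : n - 1 < ℓ + 1 := by omega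
        rw [Finset.sum_eq_single (⟨n - 1, ha⟩ : Fin (ℓ + 1))]
        · have hadj : (pathExt F R ℓ).Adj (Sum.inr ⟨n, hn⟩) (Sum.inr ⟨n - 1, ha⟩) := by
            simp [pathExt, SimpleGraph.fromRel_adj, Fin.ext_iff, -Fin.val_eq_zero_iff]
            omega
          rw [hxy]
          simp [adjM, hadj, hy1]
        · intro k _ hk
          have hadj : ¬ (pathExt F R ℓ).Adj (Sum.inr ⟨n, hn⟩) (Sum.inr k) := by
            have hk' : (k : ℕ) ≠ n - 1 := by
              intro h
              exact hk (by simp [Fin.ext_iff, h])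
            simp [pathExt, SimpleGraph.fromRel_adj, Fin.ext_iff, -Fin.val_eq_zero_iff]
            intro _
            omega
          simp [adjM, hadj]
        · intro h
          exact absurd (Finset.mem_univ _) h
      · -- two neighbors: n - 1 and n + 1
        have ha : n - 1 < ℓ + 1 := by omega
        have hb : n + 1 < ℓ + 1 := by omega
        have hsplit : ∀ k : Fin (ℓ + 1),
            adjM (pathExt F R ℓ) (Sum.inr ⟨n, hn⟩) (Sum.inr k) * x (Sum.inr k)
              = (if k = (⟨n - 1, ha⟩ : Fin (ℓ + 1)) then x (Sum.inr ⟨n - 1, ha⟩) else 0)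
                + (if k = (⟨n + 1, hb⟩ : Fin (ℓ + 1)) then x (Sum.inr ⟨n + 1, hb⟩) else 0) := by
          intro k
          by_cases hka : k = (⟨n - 1, ha⟩ : Fin (ℓ + 1))
          · rw [hka]
            have hab : (⟨n - 1, ha⟩ : Fin (ℓ + 1)) ≠ ⟨n + 1, hb⟩ := by
              simp only [ne_eq, Fin.mk.injEq]; omega
            have hadj : (pathExt F R ℓ).Adj (Sum.inr ⟨n, hn⟩) (Sum.inr ⟨n - 1, ha⟩) := by
              refine ⟨?_, Or.inr ?_⟩
              · intro hcon
                injection hcon with h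
                simp only [Fin.mk.injEq] at h
                omega
              · show n = (n - 1) + 1
                omega
            simp [adjM, hadj, hab]
          · by_cases hkb : k = (⟨n + 1, hb⟩ : Fin (ℓ + 1))
            · rw [hkb]
              have hba : (⟨n + 1, hb⟩ : Fin (ℓ + 1)) ≠ ⟨n - 1, ha⟩ := by
                simp only [ne_eq, Fin.mk.injEq]; omega
              have hadj : (pathExt F R ℓ).Adj (Sum.inr ⟨n, hn⟩) (Sum.inr ⟨n + 1, hb⟩) := by
                refine ⟨?_, Or.inl ?_⟩
                · intro hcon
                  injection hcon with h
                  simp only [Fin.mk.injEq] at h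
                  omega
                · rfl
              simp [adjM, hadj, hba]
            · have hk1 : (k : ℕ) ≠ n - 1 := fun h => hka (by simp [Fin.ext_iff, h])
              have hk2 : (k : ℕ) ≠ n + 1 := fun h => hkb (by simp [Fin.ext_iff, h])
              have hadj : ¬ (pathExt F R ℓ).Adj (Sum.inr ⟨n, hn⟩) (Sum.inr k) := by
                simp [pathExt, SimpleGraph.fromRel_adj, Fin.ext_iff, -Fin.val_eq_zero_iff]
                intro _
                omega
              simp [adjM, hadj, hka, hkb]
        rw [Finset.sum_congr rfl (fun k _ => hsplit k), Finset.sum_add_distrib]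
        simp [Finset.sum_ite_eq', hxy]
    rw [hV, hF] at hE
    have hxn : x (Sum.inr ⟨n, hn⟩) = y n := hxy _
    simp only [Pi.smul_apply, smul_eq_mul, zero_add, hxn] at hE
    linarith
  -- downward induction
  have main : ∀ d n : ℕ, n + d + 1 = ℓ → y n * y (n + 1) + (lam - 1) * y (n + 1) ^ 2 ≤ 0 := by
    intro d
    induction d with
    | zero =>
      intro n hn
      have h := heq (n + 1) (by omega) (by omega)
      have h2 : y (n + 1 + 1) = 0 := by
        simp [hy]
        omega
      simp at h
      have hn' : y n = -lam * y (n + 1) := by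
        rw [h2] at h
        linarith
      have hprod : y n * y (n + 1) = -lam * y (n + 1) ^ 2 := by rw [hn']; ring
      linarith [sq_nonneg (y (n + 1)), hprod]
    | succ d ih =>
      intro n hn
      have hQ := ih (n + 1) (by omega)
      have h := heq (n + 1) (by omega) (by omega)
      simp at h
      have hn' : y n = -lam * y (n + 1) - y (n + 1 + 1) := by linarith
      have key : 0 ≤ y (n + 1) * (y (n + 1) + y (n + 1 + 1)) :=
        stmt8_aux (lam - 1) _ _ (by linarith) hQ
      have hprod : y n * y (n + 1) = -lam * y (n + 1) ^ 2 - y (n + 1 + 1) * y (n + 1) := by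
        rw [hn']; ring
      nlinarith [key, hprod]
  -- conclude
  have hi1 : (i : ℕ) + 1 ≤ ℓ := by
    have := j.isLt
    omega
  obtain ⟨d, hd⟩ : ∃ d, (i : ℕ) + d + 1 = ℓ := ⟨ℓ - (i : ℕ) - 1, by omega⟩
  have hP := main d (i : ℕ) hd
  rw [hxy i, hxy j, hij]
  exact stmt8_aux (lam - 1) _ _ (by linarith) hP
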